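/- Fix (ε,d) ∈ {(1,1),(−1,0),(1,0)} and r ≥ r₁. For a tuple p = ([v₀],[v₁],[v₂],[v₃]) ∈ P_r^{(4)} the following are equivalent: (a) the Gram matrix (ω(v_i,v_j))_{0≤i,j≤3} is nonsingular; (b) the vectors v₀,v₁,v₂,v₃ are linearly independent and ω restricted to their span is nondegenerate (i.e. p ∈ P_r^{{4}}); (c) Δ(CR₁(p),CR₂(p)) ≠ 0. -/

import Mathlib

noncomputable section

open scoped Classical

namespace DCM

/-- `Vc r d` is `ℂ^(2r+d)`, with coordinates taken in the ordered basis
`e_r, …, e_1, (h), f_1, …, f_r` (the middle vector `h` being present only if `d = 1`). -/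
abbrev Vc (r d : ℕ) := Fin (2 * r + d) → ℂ

/-- `e_i` for `1 ≤ i ≤ r`: the standard basis vector at position `r - i`. -/
def eV (r d i : ℕ) : Vc r d := fun k => if (k : ℕ) = r - i then 1 else 0

/-- `h`: the standard basis vector at position `r` (relevant only when `d = 1`). -/
def hV (r d : ℕ) : Vc r d := fun k => if (k : ℕ) = r then 1 else 0

/-- `f_i` for `1 ≤ i ≤ r`: the standard basis vector at position `r + d + i - 1`. -/
def fV (r d i : ℕ) : Vc r d := fun k => if (k : ℕ) = r + d + i - 1 then 1 else 0

/-- The ε-symmetric bilinear form ω on `Vc r d`, determined by `ω(e_i,f_j) = δ_ij`,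
`ω(f_i,e_j) = ε·δ_ij`, `ω(e_i,e_j) = ω(f_i,f_j) = 0`, and (when `d = 1`)
`ω(h,h) = 1` and `h` orthogonal to all `e_i`, `f_i`. -/
def om (ε : ℂ) (r d : ℕ) (v w : Vc r d) : ℂ :=
  (∑ j : Fin r,
    (v ⟨r - 1 - (j : ℕ), by have := j.isLt; omega⟩ *
        w ⟨r + d + (j : ℕ), by have := j.isLt; omega⟩ +
      ε * v ⟨r + d + (j : ℕ), by have := j.isLt; omega⟩ *
        w ⟨r - 1 - (j : ℕ), by have := j.isLt; omega⟩)) +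
  (if hd : d = 1 then v ⟨r, by omega⟩ * w ⟨r, by omega⟩ else 0)

/-- `v` is a nonzero isotropic vector, i.e. it represents a line `[v] ∈ P_r`. -/
def IsoV (ε : ℂ) (r d : ℕ) (v : Vc r d) : Prop := v ≠ 0 ∧ om ε r d v v = 0

/-- `g` lies in `G_r`, the group of linear automorphisms preserving ω. -/
def InG (ε : ℂ) (r d : ℕ) (g : Vc r d ≃ₗ[ℂ] Vc r d) : Prop :=
  ∀ v w, om ε r d (g v) (g w) = om ε r d v w

/-- The ω-cross-ratio `CR₀`. -/
def CR0 (ε : ℂ) (r d : ℕ) (v0 v1 v2 v3 : Vc r d) : ℂ :=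
  (om ε r d v0 v2 * om ε r d v1 v3) / (om ε r d v0 v3 * om ε r d v1 v2)

/-- The ω-cross-ratio `CR₁`. -/
def CR1 (ε : ℂ) (r d : ℕ) (v0 v1 v2 v3 : Vc r d) : ℂ := (CR0 ε r d v1 v2 v0 v3)⁻¹

/-- The ω-cross-ratio `CR₂`. -/
def CR2 (ε : ℂ) (r d : ℕ) (v0 v1 v2 v3 : Vc r d) : ℂ := CR0 ε r d v2 v0 v1 v3

/-- `(v0,v1,v2,v3)` represents a tuple of lines in `P_r^{(4)}`:
all lines isotropic and pairwise non-orthogonal. -/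
def Conf4 (ε : ℂ) (r d : ℕ) (v0 v1 v2 v3 : Vc r d) : Prop :=
  IsoV ε r d v0 ∧ IsoV ε r d v1 ∧ IsoV ε r d v2 ∧ IsoV ε r d v3 ∧
  om ε r d v0 v1 ≠ 0 ∧ om ε r d v0 v2 ≠ 0 ∧ om ε r d v0 v3 ≠ 0 ∧
  om ε r d v1 v2 ≠ 0 ∧ om ε r d v1 v3 ≠ 0 ∧ om ε r d v2 v3 ≠ 0

/-- `(v0,…,v4)` represents a tuple of lines in `P_r^{(5)}`. -/
def Conf5 (ε : ℂ) (r d : ℕ) (v0 v1 v2 v3 v4 : Vc r d) : Prop :=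
  Conf4 ε r d v0 v1 v2 v3 ∧ IsoV ε r d v4 ∧
  om ε r d v0 v4 ≠ 0 ∧ om ε r d v1 v4 ≠ 0 ∧ om ε r d v2 v4 ≠ 0 ∧ om ε r d v3 v4 ≠ 0

/-- ω restricted to the span of `s` is nondegenerate. -/
def NondegOn (ε : ℂ) (r d : ℕ) (s : Set (Vc r d)) : Prop :=
  ∀ x ∈ Submodule.span ℂ s, (∀ y ∈ Submodule.span ℂ s, om ε r d x y = 0) → x = 0

/-- `(v0,v1,v2,v3)` represents a tuple of lines in `P_r^{{4}}`: pairwise non-orthogonal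
isotropic lines, linearly independent, spanning a nondegenerate subspace. -/
def Gen4 (ε : ℂ) (r d : ℕ) (v0 v1 v2 v3 : Vc r d) : Prop :=
  Conf4 ε r d v0 v1 v2 v3 ∧ LinearIndependent ℂ ![v0, v1, v2, v3] ∧
  NondegOn ε r d {v0, v1, v2, v3}

/-- `(v0,…,v4)` represents a tuple of lines in `P_r^{{5}}`: every 4-element subtuple
(in the induced order) lies in `P_r^{{4}}`. -/
def Gen5 (ε : ℂ) (r d : ℕ) (v0 v1 v2 v3 v4 : Vc r d) : Prop :=
  Conf5 ε r d v0 v1 v2 v3 v4 ∧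
  Gen4 ε r d v0 v1 v2 v3 ∧ Gen4 ε r d v0 v1 v2 v4 ∧ Gen4 ε r d v0 v1 v3 v4 ∧
  Gen4 ε r d v0 v2 v3 v4 ∧ Gen4 ε r d v1 v2 v3 v4

/-- `Γ(z₁,z₂) = 1 - z₁ - z₂`. -/
def Gam (z1 z2 : ℂ) : ℂ := 1 - z1 - z2

/-- `Δ(z₁,z₂) = Γ(z₁,z₂)² - 2(1+ε)·z₁z₂`. -/
def Del (ε z1 z2 : ℂ) : ℂ := Gam z1 z2 ^ 2 - 2 * (1 + ε) * z1 * z2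

/-- `Δ^{1/2}`, relative to a fixed choice `sq` of complex square root:
`Γ` if `ε = -1`, and `sq ∘ Δ` otherwise. -/
def DelHalf (ε : ℂ) (sq : ℂ → ℂ) (z1 z2 : ℂ) : ℂ :=
  if ε = -1 then Gam z1 z2 else sq (Del ε z1 z2)

/-- `φ₊ = (Δ^{1/2} + Γ)/2`. -/
def phiP (ε : ℂ) (sq : ℂ → ℂ) (z1 z2 : ℂ) : ℂ := (DelHalf ε sq z1 z2 + Gam z1 z2) / 2

/-- `φ₋ = (Δ^{1/2} - Γ)/2`. -/
def phiM (ε : ℂ) (sq : ℂ → ℂ) (z1 z2 : ℂ) : ℂ := (DelHalf ε sq z1 z2 - Gam z1 z2) / 2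

lemma detFinFour {R : Type*} [CommRing R] (M : Matrix (Fin 4) (Fin 4) R) :
    M.det =
      M 0 0 * M 1 1 * M 2 2 * M 3 3 - M 0 0 * M 1 1 * M 2 3 * M 3 2 -
      M 0 0 * M 1 2 * M 2 1 * M 3 3 + M 0 0 * M 1 2 * M 2 3 * M 3 1 +
      M 0 0 * M 1 3 * M 2 1 * M 3 2 - M 0 0 * M 1 3 * M 2 2 * M 3 1 -
      M 0 1 * M 1 0 * M 2 2 * M 3 3 + M 0 1 * M 1 0 * M 2 3 * M 3 2 +
      M 0 1 * M 1 2 * M 2 0 * M 3 3 - M 0 1 * M 1 2 * M 2 3 * M 3 0 -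
      M 0 1 * M 1 3 * M 2 0 * M 3 2 + M 0 1 * M 1 3 * M 2 2 * M 3 0 +
      M 0 2 * M 1 0 * M 2 1 * M 3 3 - M 0 2 * M 1 0 * M 2 3 * M 3 1 -
      M 0 2 * M 1 1 * M 2 0 * M 3 3 + M 0 2 * M 1 1 * M 2 3 * M 3 0 +
      M 0 2 * M 1 3 * M 2 0 * M 3 1 - M 0 2 * M 1 3 * M 2 1 * M 3 0 -
      M 0 3 * M 1 0 * M 2 1 * M 3 2 + M 0 3 * M 1 0 * M 2 2 * M 3 1 +
      M 0 3 * M 1 1 * M 2 0 * M 3 2 - M 0 3 * M 1 1 * M 2 2 * M 3 0 -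
      M 0 3 * M 1 2 * M 2 0 * M 3 1 + M 0 3 * M 1 2 * M 2 1 * M 3 0 := by
  rw [Matrix.det_succ_row_zero]
  simp [Fin.sum_univ_succ, Matrix.det_fin_three, Fin.succAbove,
    show (2 : Fin 3).succ = 3 from rfl, show (2 : Fin 3).castSucc = 2 from rfl]
  ring

section AuxLemmas

variable (ε : ℂ) (r d : ℕ)

lemma om_add_left (u v w : Vc r d) : om ε r d (u + v) w = om ε r d u w + om ε r d v w := by
  unfold om
  rw [add_add_add_comm, ← Finset.sum_add_distrib]
  congr 1
  · exact Finset.sum_congr rfl fun j _ => by simp only [Pi.add_apply]; ring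
  · split_ifs <;> (try simp only [Pi.add_apply]) <;> ring

lemma om_add_right (u v w : Vc r d) : om ε r d u (v + w) = om ε r d u v + om ε r d u w := by
  unfold om
  rw [add_add_add_comm, ← Finset.sum_add_distrib]
  congr 1
  · exact Finset.sum_congr rfl fun j _ => by simp only [Pi.add_apply]; ring
  · split_ifs <;> (try simp only [Pi.add_apply]) <;> ring

lemma om_smul_left (c : ℂ) (u w : Vc r d) : om ε r d (c • u) w = c * om ε r d u w := by
  unfold om
  rw [mul_add, Finset.mul_sum]
  congr 1
  · exact Finset.sum_congr rfl fun j _ => by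
      simp only [Pi.smul_apply, smul_eq_mul]; ring
  · split_ifs <;> (try simp only [Pi.smul_apply, smul_eq_mul]) <;> ring

lemma om_smul_right (c : ℂ) (u w : Vc r d) : om ε r d u (c • w) = c * om ε r d u w := by
  unfold om
  rw [mul_add, Finset.mul_sum]
  congr 1
  · exact Finset.sum_congr rfl fun j _ => by
      simp only [Pi.smul_apply, smul_eq_mul]; ring
  · split_ifs <;> (try simp only [Pi.smul_apply, smul_eq_mul]) <;> ring

lemma om_zero_right (u : Vc r d) : om ε r d u 0 = 0 := by simp [om]

lemma om_symm (hε : ε * ε = 1) (hd : d = 1 → ε = 1) (u v : Vc r d) :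
    om ε r d v u = ε * om ε r d u v := by
  unfold om
  rw [mul_add, Finset.mul_sum]
  congr 1
  · exact Finset.sum_congr rfl fun j _ => by
      have h : ε * (u ⟨r - 1 - (j:ℕ), by have := j.isLt; omega⟩ * v ⟨r + d + (j:ℕ), by have := j.isLt; omega⟩ +
          ε * u ⟨r + d + (j:ℕ), by have := j.isLt; omega⟩ * v ⟨r - 1 - (j:ℕ), by have := j.isLt; omega⟩) =
          ε * u ⟨r - 1 - (j:ℕ), by have := j.isLt; omega⟩ * v ⟨r + d + (j:ℕ), by have := j.isLt; omega⟩ +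
          (ε*ε) * u ⟨r + d + (j:ℕ), by have := j.isLt; omega⟩ * v ⟨r - 1 - (j:ℕ), by have := j.isLt; omega⟩ := by ring
      rw [h, hε]; ring
  · split_ifs with h
    · rw [hd h]; ring
    · ring

lemma om_sum_left (c : Fin 4 → ℂ) (V : Fin 4 → Vc r d) (w : Vc r d) :
    om ε r d (∑ i, c i • V i) w = ∑ i, c i * om ε r d (V i) w := by
  rw [Fin.sum_univ_four, Fin.sum_univ_four, om_add_left, om_add_left, om_add_left,
    om_smul_left, om_smul_left, om_smul_left, om_smul_left]

lemma om_sum_right (c : Fin 4 → ℂ) (V : Fin 4 → Vc r d) (w : Vc r d) :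
    om ε r d w (∑ i, c i • V i) = ∑ i, om ε r d w (V i) * c i := by
  rw [Fin.sum_univ_four, Fin.sum_univ_four, om_add_right, om_add_right, om_add_right,
    om_smul_right, om_smul_right, om_smul_right, om_smul_right]
  ring

end AuxLemmas

/-- For a tuple in `P_r^{(4)}`, the Gram matrix is nonsingular iff the
tuple lies in `P_r^{{4}}` iff `Δ(CR₁, CR₂) ≠ 0`. -/
theorem statement_6 (ε : ℂ) (d : ℕ)
    (hεd : (ε = 1 ∧ d = 1) ∨ (ε = -1 ∧ d = 0) ∨ (ε = 1 ∧ d = 0))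
    (r : ℕ) (hr1 : 1 ≤ r) (hr2 : ε = 1 ∧ d = 0 → 2 ≤ r)
    (v0 v1 v2 v3 : Vc r d) (hp : Conf4 ε r d v0 v1 v2 v3) :
    ((Matrix.of fun i j : Fin 4 =>
        om ε r d (![v0, v1, v2, v3] i) (![v0, v1, v2, v3] j)).det ≠ 0 ↔
      (LinearIndependent ℂ ![v0, v1, v2, v3] ∧ NondegOn ε r d {v0, v1, v2, v3})) ∧
    ((LinearIndependent ℂ ![v0, v1, v2, v3] ∧ NondegOn ε r d {v0, v1, v2, v3}) ↔
      Del ε (CR1 ε r d v0 v1 v2 v3) (CR2 ε r d v0 v1 v2 v3) ≠ 0) := by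
  have hε2 : ε * ε = 1 := by
    rcases hεd with ⟨h, _⟩ | ⟨h, _⟩ | ⟨h, _⟩ <;> rw [h] <;> ring
  have hd1 : d = 1 → ε = 1 := by
    rcases hεd with ⟨h, h2⟩ | ⟨h, h2⟩ | ⟨h, h2⟩ <;> simp [h, h2]
  obtain ⟨⟨hv0ne, hq0⟩, ⟨hv1ne, hq1⟩, ⟨hv2ne, hq2⟩, ⟨hv3ne, hq3⟩,
    h01, h02, h03, h12, h13, h23⟩ := hp
  set V : Fin 4 → Vc r d := ![v0, v1, v2, v3] with hVdef
  set G : Matrix (Fin 4) (Fin 4) ℂ := Matrix.of fun i j => om ε r d (V i) (V j) with hGdef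
  have hVmem : ∀ i, V i ∈ ({v0, v1, v2, v3} : Set (Vc r d)) := by
    intro i
    fin_cases i <;> simp [hVdef]
  have hrange : ({v0, v1, v2, v3} : Set (Vc r d)) = Set.range V := by
    ext y
    simp only [Set.mem_insert_iff, Set.mem_singleton_iff, Set.mem_range]
    constructor
    · rintro (rfl | rfl | rfl | rfl)
      exacts [⟨0, rfl⟩, ⟨1, rfl⟩, ⟨2, rfl⟩, ⟨3, rfl⟩]
    · rintro ⟨i, rfl⟩
      fin_cases i <;> simp [hVdef]
  have hspan : ∀ x ∈ Submodule.span ℂ ({v0, v1, v2, v3} : Set (Vc r d)),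
      ∃ c : Fin 4 → ℂ, ∑ i, c i • V i = x := by
    intro x hx
    rw [hrange] at hx
    exact Submodule.mem_span_range_iff_exists_fun ℂ |>.mp hx
  -- (a) ↔ (b)
  have hab : G.det ≠ 0 ↔
      (LinearIndependent ℂ V ∧ NondegOn ε r d {v0, v1, v2, v3}) := by
    constructor
    · intro hdet
      constructor
      · rw [Fintype.linearIndependent_iff]
        intro c hc
        have hGc : Matrix.mulVec G c = 0 := by
          funext j
          have h1 := om_sum_right ε r d c V (V j)
          rw [hc, om_zero_right] at h1
          simpa [hGdef, Matrix.mulVec, dotProduct] using h1.symm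
        have hc0 : c = 0 := by
          by_contra hne
          exact hdet (Matrix.exists_mulVec_eq_zero_iff.mp ⟨c, hne, hGc⟩)
        exact fun i => congrFun hc0 i
      · intro x hx hperp
        obtain ⟨c, hc⟩ := hspan x hx
        have hcG : Matrix.vecMul c G = 0 := by
          funext j
          have h1 := om_sum_left ε r d c V (V j)
          rw [hc] at h1
          have h2 : om ε r d x (V j) = 0 :=
            hperp (V j) (Submodule.subset_span (hVmem j))
          rw [h2] at h1
          simpa [hGdef, Matrix.vecMul, dotProduct] using h1.symm
        have hc0 : c = 0 := by
          by_contra hne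
          exact hdet (Matrix.exists_vecMul_eq_zero_iff.mp ⟨c, hne, hcG⟩)
        rw [← hc, hc0]
        simp
    · rintro ⟨hli, hnd⟩
      intro hdet0
      obtain ⟨c, hcne, hGc⟩ := Matrix.exists_mulVec_eq_zero_iff.mpr hdet0
      set x : Vc r d := ∑ i, c i • V i with hxdef
      have hxspan : x ∈ Submodule.span ℂ ({v0, v1, v2, v3} : Set (Vc r d)) :=
        Submodule.sum_mem _ fun i _ =>
          Submodule.smul_mem _ _ (Submodule.subset_span (hVmem i))
      have hperp : ∀ y ∈ Submodule.span ℂ ({v0, v1, v2, v3} : Set (Vc r d)),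
          om ε r d x y = 0 := by
        intro y hy
        obtain ⟨b, hb⟩ := hspan y hy
        rw [← hb, om_sum_right]
        apply Finset.sum_eq_zero
        intro i _
        have h1 : om ε r d (V i) x = 0 := by
          have h2 := congrFun hGc i
          rw [hxdef, om_sum_right]
          simpa [hGdef, Matrix.mulVec, dotProduct] using h2
        rw [om_symm ε r d hε2 hd1 (V i) x, h1, mul_zero, zero_mul]
      have hx0 : x = 0 := hnd x hxspan hperp
      exact hcne (funext ((Fintype.linearIndependent_iff.mp hli) c hx0))
  -- symmetry rewrites for Gram entries
  have hs10 : om ε r d v1 v0 = ε * om ε r d v0 v1 := om_symm ε r d hε2 hd1 v0 v1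
  have hs20 : om ε r d v2 v0 = ε * om ε r d v0 v2 := om_symm ε r d hε2 hd1 v0 v2
  have hs30 : om ε r d v3 v0 = ε * om ε r d v0 v3 := om_symm ε r d hε2 hd1 v0 v3
  have hs21 : om ε r d v2 v1 = ε * om ε r d v1 v2 := om_symm ε r d hε2 hd1 v1 v2
  have hs31 : om ε r d v3 v1 = ε * om ε r d v1 v3 := om_symm ε r d hε2 hd1 v1 v3
  have hs32 : om ε r d v3 v2 = ε * om ε r d v2 v3 := om_symm ε r d hε2 hd1 v2 v3
  have hdet_eq : G.det =
      (om ε r d v0 v1 * om ε r d v2 v3 - om ε r d v0 v2 * om ε r d v1 v3 -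
          ε * om ε r d v0 v3 * om ε r d v1 v2) ^ 2 -
        2 * (1 + ε) * ε * (om ε r d v0 v2 * om ε r d v1 v3) *
          (om ε r d v0 v3 * om ε r d v1 v2) := by
    rw [hGdef, detFinFour]
    simp only [Matrix.of_apply, hVdef, Matrix.cons_val', Matrix.cons_val_zero,
      Matrix.cons_val_one, Matrix.head_cons, Matrix.cons_val_two, Matrix.tail_cons,
      Matrix.cons_val_three, Matrix.empty_val', Matrix.cons_val_fin_one,
      Matrix.head_fin_const]
    rw [hq0, hq1, hq2, hq3, hs10, hs20, hs30, hs21, hs31, hs32]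
    rcases hεd with ⟨h, _⟩ | ⟨h, _⟩ | ⟨h, _⟩ <;> rw [h] <;> ring
  have hP : (om ε r d v0 v1 * om ε r d v2 v3) ^ 2 ≠ 0 :=
    pow_ne_zero _ (mul_ne_zero h01 h23)
  have key : Del ε (CR1 ε r d v0 v1 v2 v3) (CR2 ε r d v0 v1 v2 v3) *
      (om ε r d v0 v1 * om ε r d v2 v3) ^ 2 = G.det := by
    rw [hdet_eq]
    unfold Del Gam CR1 CR2 CR0
    rw [hs10, hs20, hs21]
    rcases hεd with ⟨h, _⟩ | ⟨h, _⟩ | ⟨h, _⟩ <;> subst h <;>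
      field_simp [h01, h02, h03, h12, h13, h23] <;> ring
  have hac : G.det ≠ 0 ↔
      Del ε (CR1 ε r d v0 v1 v2 v3) (CR2 ε r d v0 v1 v2 v3) ≠ 0 := by
    constructor
    · intro hdet hDel0
      rw [← key, hDel0, zero_mul] at hdet
      exact hdet rfl
    · intro hDel
      rw [← key]
      exact mul_ne_zero hDel hP
  exact ⟨hab, hab.symm.trans hac⟩
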